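/- Let f : X → 𝒢(Z,C) be a convex function and x₀ ∈ dom f. Then f(x₀) = cl co ⋃_{x∈X} f(x) holds if and only if [x₀ solves the strict set-valued Minty inequality (MVI_I): 0 ∈ f′(x, x₀−x) for all x ∈ X, and for every x ∈ X the segment restriction of f is lattice lower semicontinuous at 0, i.e. f(x₀) ⊇ ⋂_{t₀∈(0,1]} cl co ⋃_{0≤t<t₀} f(x₀ + t(x−x₀))]. Moreover, if x₀ solves the strict scalarized Minty inequality (mvi_I): φ′_{f,z*}(x, x₀−x) ≤ 0 for all x ∈ X and all z* ∈ C⁻∖{0}, and for every x ∈ X and every z* ∈ C⁻∖{0} the function t ↦ φ_{f,z*}(x₀ + t(x−x₀)) on [0,1] is lower semicontinuous at 0, then f(x₀) = cl co ⋃_{x∈X} f(x). -/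

import Mathlib

open Set Pointwise

noncomputable section

variable {Z : Type*} [AddCommGroup Z] [Module ℝ Z] [TopologicalSpace Z]

/-- The inf-residual `A ⊖ B = {z : B + {z} ⊆ A}`. -/
def resid (A B : Set Z) : Set Z := {z : Z | B + {z} ⊆ A}

/-- The recession cone `0⁺A`, with the convention `0⁺∅ = ∅`. -/
def recCone (A : Set Z) : Set Z := {z : Z | A.Nonempty ∧ A + {z} ⊆ A}

/-- `A ⊕ B = cl (A + B)`. -/
def oplus (A B : Set Z) : Set Z := closure (A + B)

/-- Membership in `𝒢(Z,C)`: `A = cl co (A + C)`. -/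
def IsG (C A : Set Z) : Prop := A = closure (convexHull ℝ (A + C))

/-- The set `C⁻ \ {0}` of nonzero elements of the negative dual cone. -/
def negDualNZ (C : Set Z) : Set (Z →L[ℝ] ℝ) :=
  {p : Z →L[ℝ] ℝ | (∀ c ∈ C, p c ≤ 0) ∧ p ≠ 0}

/-- `inf {-z*(z) : z ∈ A}` as an extended real. -/
def scal (p : Z →L[ℝ] ℝ) (A : Set Z) : EReal :=
  sInf ((fun z => ((-(p z) : ℝ) : EReal)) '' A)

/-- Support function `σ(z*|A) = sup {z*(z) : z ∈ A}` as an extended real. -/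
def suppF (p : Z →L[ℝ] ℝ) (A : Set Z) : EReal :=
  sSup ((fun z => ((p z : ℝ) : EReal)) '' A)

/-- Inf-residuation on the extended reals: `r ⊖ s = inf {t ∈ ℝ : r ≤ s + t}`. -/
def eresid (r s : EReal) : EReal :=
  sInf ((fun t : ℝ => (t : EReal)) '' {t : ℝ | r ≤ s + (t : EReal)})

variable {X : Type*} [AddCommGroup X] [Module ℝ X]

/-- The scalarization `φ_{f,z*}(x) = inf {-z*(z) : z ∈ f(x)}`. -/
def phi (f : X → Set Z) (p : Z →L[ℝ] ℝ) (x : X) : EReal := scal p (f x)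

/-- Convexity for set-valued functions:
`f(t x₁ + (1-t) x₂) ⊇ cl (t f(x₁) + (1-t) f(x₂))`. -/
def ConvexSV (f : X → Set Z) : Prop :=
  ∀ x₁ x₂ : X, ∀ t : ℝ, t ∈ Ioo (0:ℝ) 1 →
    closure (t • f x₁ + (1 - t) • f x₂) ⊆ f (t • x₁ + (1 - t) • x₂)

/-- The set-valued directional derivative
`f′(x,u) = ⋂_{t₀>0} cl co ⋃_{0<t<t₀} (1/t)•(f(x+tu) ⊖ f(x))`. -/
def sder (f : X → Set Z) (x u : X) : Set Z :=
  ⋂ t₀ ∈ Ioi (0:ℝ), closure (convexHull ℝ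
    (⋃ t ∈ Ioo (0:ℝ) t₀, (1 / t) • resid (f (x + t • u)) (f x)))

/-- The scalar Dini derivative `φ′_{f,z*}(x,u) = inf_{t>0} (1/t)(φ(x+tu) ⊖ φ(x))`. -/
def phiDer (f : X → Set Z) (p : Z →L[ℝ] ℝ) (x u : X) : EReal :=
  ⨅ t ∈ Ioi (0:ℝ), (((1 / t : ℝ)) : EReal) * eresid (phi f p (x + t • u)) (phi f p x)

end


section helpers

lemma er_exists_le_coe (e : EReal) (h : e ≠ ⊤) : ∃ K : ℝ, e ≤ (K : EReal) := by
  induction e using EReal.rec with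
  | bot => exact ⟨0, bot_le⟩
  | coe a => exact ⟨a, le_refl _⟩
  | top => exact absurd rfl h

lemma er_le_coe_of_forall_eps {Y : EReal} {c : ℝ}
    (h : ∀ ε : ℝ, 0 < ε → Y ≤ ((c + ε : ℝ) : EReal)) : Y ≤ (c : EReal) := by
  by_contra h'
  obtain ⟨d, hcd, hdY⟩ := EReal.exists_between_coe_real (not_le.1 h')
  have hcd' : c < d := EReal.coe_lt_coe_iff.1 hcd
  have := h (d - c) (by linarith)
  rw [show c + (d - c) = d by ring] at this
  exact absurd (lt_of_lt_of_le hdY this) (lt_irrefl _)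

lemma eresid_le {r s : EReal} {c : ℝ} (h : r ≤ s + (c : EReal)) :
    eresid r s ≤ (c : EReal) := sInf_le ⟨c, h, rfl⟩

lemma le_of_eresid_lt {r s : EReal} {c : ℝ} (h : eresid r s < (c : EReal)) :
    r ≤ s + (c : EReal) := by
  obtain ⟨_, ⟨t, ht, rfl⟩, hlt⟩ := sInf_lt_iff.1 h
  exact le_trans ht (add_le_add (le_refl s) (EReal.coe_le_coe_iff.2 (le_of_lt (EReal.coe_lt_coe_iff.1 hlt))))

lemma er_posmul_lt {c y : ℝ} (hc : 0 < c) {x : EReal} :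
    (c : EReal) * x < (y : EReal) ↔ x < ((y / c : ℝ) : EReal) := by
  induction x using EReal.rec with
  | bot =>
    simp only [EReal.coe_mul_bot_of_pos hc]
    exact ⟨fun _ => bot_lt_iff_ne_bot.2 (EReal.coe_ne_bot _),
      fun _ => bot_lt_iff_ne_bot.2 (EReal.coe_ne_bot _)⟩
  | coe a =>
    rw [← EReal.coe_mul, EReal.coe_lt_coe_iff, EReal.coe_lt_coe_iff, lt_div_iff₀ hc, mul_comm]
  | top =>
    simp only [EReal.coe_mul_top_of_pos hc]
    exact ⟨fun h => absurd h (not_lt.2 le_top), fun h => absurd h (not_lt.2 le_top)⟩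

lemma er_posmul_le {c y : ℝ} (hc : 0 < c) {x : EReal} :
    (c : EReal) * x ≤ (y : EReal) ↔ x ≤ ((y / c : ℝ) : EReal) := by
  induction x using EReal.rec with
  | bot => simp only [EReal.coe_mul_bot_of_pos hc]; exact ⟨fun _ => bot_le, fun _ => bot_le⟩
  | coe a =>
    rw [← EReal.coe_mul, EReal.coe_le_coe_iff, EReal.coe_le_coe_iff, le_div_iff₀ hc, mul_comm]
  | top =>
    simp only [EReal.coe_mul_top_of_pos hc]
    exact ⟨fun h => absurd h (not_le.2 (EReal.coe_lt_top _)),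
      fun h => absurd h (not_le.2 (EReal.coe_lt_top _))⟩

end helpers

section main
variable {Z : Type*} [AddCommGroup Z] [Module ℝ Z] [TopologicalSpace Z]
variable {X : Type*} [AddCommGroup X] [Module ℝ X]

lemma scal_resid (p : Z →L[ℝ] ℝ) {A B : Set Z} {z : Z} (h : B + {z} ⊆ A) :
    scal p A ≤ scal p B + ((-(p z) : ℝ) : EReal) := by
  have hmem : ∀ b ∈ B, b + z ∈ A := fun b hb => h (Set.add_mem_add hb (Set.mem_singleton z))
  rcases eq_or_ne (scal p B) ⊤ with hB | hB
  · rw [hB, EReal.top_add_coe]; exact le_top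
  rcases eq_or_ne (scal p B) ⊥ with hB' | hB'
  · rw [hB', EReal.bot_add]
    by_contra hA
    obtain ⟨d, hd1, hd2⟩ := EReal.exists_between_coe_real (not_le.1 hA)
    have hlt : scal p B < ((d - (-(p z)) : ℝ) : EReal) := by
      rw [hB']; exact bot_lt_iff_ne_bot.2 (EReal.coe_ne_bot _)
    obtain ⟨_, ⟨b, hb, rfl⟩, hblt⟩ := sInf_lt_iff.1 hlt
    have hbr : -(p b) < d - (-(p z)) := EReal.coe_lt_coe_iff.1 hblt
    have : scal p A ≤ ((-(p (b + z)) : ℝ) : EReal) := sInf_le ⟨b + z, hmem b hb, rfl⟩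
    have h2 : ((-(p (b + z)) : ℝ) : EReal) ≤ (d : EReal) := by
      rw [EReal.coe_le_coe_iff, map_add]; linarith
    exact absurd (lt_of_lt_of_le hd2 (le_trans this h2)) (lt_irrefl _)
  · obtain ⟨dv, hdv⟩ : ∃ dv : ℝ, scal p B = (dv : EReal) :=
      ⟨(scal p B).toReal, (EReal.coe_toReal hB hB').symm⟩
    rw [hdv, ← EReal.coe_add]
    apply er_le_coe_of_forall_eps
    intro ε hε
    have hlt : scal p B < ((dv + ε : ℝ) : EReal) := by
      rw [hdv, EReal.coe_lt_coe_iff]; linarith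
    obtain ⟨_, ⟨b, hb, rfl⟩, hblt⟩ := sInf_lt_iff.1 hlt
    have hbr : -(p b) < dv + ε := EReal.coe_lt_coe_iff.1 hblt
    have h1 : scal p A ≤ ((-(p (b + z)) : ℝ) : EReal) := sInf_le ⟨b + z, hmem b hb, rfl⟩
    refine le_trans h1 (EReal.coe_le_coe_iff.2 ?_)
    rw [map_add]; linarith

lemma phi_conv (f : X → Set Z) (hf : ConvexSV f) (p : Z →L[ℝ] ℝ)
    {a b : X} {l A B : ℝ} (hl : l ∈ Ioo (0:ℝ) 1)
    (hA : phi f p a ≤ (A : EReal)) (hB : phi f p b ≤ (B : EReal)) :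
    phi f p (l • a + (1 - l) • b) ≤ ((l * A + (1 - l) * B : ℝ) : EReal) := by
  apply er_le_coe_of_forall_eps
  intro ε hε
  have hA' : phi f p a < ((A + ε : ℝ) : EReal) :=
    lt_of_le_of_lt hA (EReal.coe_lt_coe_iff.2 (by linarith))
  have hB' : phi f p b < ((B + ε : ℝ) : EReal) :=
    lt_of_le_of_lt hB (EReal.coe_lt_coe_iff.2 (by linarith))
  obtain ⟨_, ⟨z₁, hz₁, rfl⟩, h₁⟩ := sInf_lt_iff.1 hA'
  obtain ⟨_, ⟨z₂, hz₂, rfl⟩, h₂⟩ := sInf_lt_iff.1 hB'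
  have h₁' : -(p z₁) < A + ε := EReal.coe_lt_coe_iff.1 h₁
  have h₂' : -(p z₂) < B + ε := EReal.coe_lt_coe_iff.1 h₂
  have hw : l • z₁ + (1 - l) • z₂ ∈ f (l • a + (1 - l) • b) :=
    hf a b l hl (subset_closure
      (Set.add_mem_add (smul_mem_smul_set hz₁) (smul_mem_smul_set hz₂)))
  have h3 : phi f p (l • a + (1 - l) • b) ≤ ((-(p (l • z₁ + (1 - l) • z₂)) : ℝ) : EReal) :=
    sInf_le ⟨_, hw, rfl⟩
  obtain ⟨hl0, hl1⟩ := hl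
  refine le_trans h3 (EReal.coe_le_coe_iff.2 ?_)
  rw [map_add, map_smul, map_smul, smul_eq_mul, smul_eq_mul]
  nlinarith [hl0, hl1, mul_le_mul_of_nonneg_left h₁'.le hl0.le,
    mul_le_mul_of_nonneg_left h₂'.le (by linarith : (0:ℝ) ≤ 1 - l)]

lemma sder_to_phiDer (f : X → Set Z) (p : Z →L[ℝ] ℝ) {x u : X}
    (h : (0:Z) ∈ sder f x u) : phiDer f p x u ≤ 0 := by
  by_contra h'
  obtain ⟨m, hm0, hmD⟩ := EReal.exists_between_coe_real (not_le.1 h')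
  have hm0' : (0:ℝ) < m := by
    have := EReal.coe_lt_coe_iff (x := (0:ℝ)) (y := m)
    simpa using hm0
  have hU : (0:Z) ∈ closure (convexHull ℝ
      (⋃ t ∈ Ioo (0:ℝ) 1, (1 / t) • resid (f (x + t • u)) (f x))) := by
    have := mem_iInter₂.1 h 1 (mem_Ioi.2 one_pos)
    exact this
  set U := ⋃ t ∈ Ioo (0:ℝ) 1, (1 / t) • resid (f (x + t • u)) (f x) with hUdef
  have hsub : U ⊆ {w : Z | p w ≤ -m} := by
    rintro w hw
    simp only [hUdef, mem_iUnion, exists_prop] at hw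
    obtain ⟨t, ht, hw⟩ := hw
    obtain ⟨z, hz, rfl⟩ := hw
    have h1t : (0:ℝ) < 1 / t := one_div_pos.2 ht.1
    have h1 : phi f p (x + t • u) ≤ phi f p x + ((-(p z) : ℝ) : EReal) := scal_resid p hz
    have h2 : eresid (phi f p (x + t • u)) (phi f p x) ≤ ((-(p z) : ℝ) : EReal) := eresid_le h1
    have h3 : phiDer f p x u ≤
        ((1 / t : ℝ) : EReal) * eresid (phi f p (x + t • u)) (phi f p x) :=
      iInf₂_le t (mem_Ioi.2 ht.1)
    have h4 : ((1 / t : ℝ) : EReal) * eresid (phi f p (x + t • u)) (phi f p x)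
        ≤ ((-(p ((1/t) • z)) : ℝ) : EReal) := by
      rw [er_posmul_le h1t]
      have htne : t ≠ 0 := ne_of_gt ht.1
      have heq : (-(p ((1/t) • z)) / (1/t) : ℝ) = -(p z) := by
        rw [map_smul, smul_eq_mul]
        field_simp
      rw [heq]
      exact h2
    have h5 : (m : EReal) < ((-(p ((1/t) • z)) : ℝ) : EReal) :=
      lt_of_lt_of_le hmD (le_trans h3 h4)
    have := EReal.coe_lt_coe_iff.1 h5
    simp only [mem_setOf_eq]
    linarith
  have hH : closure (convexHull ℝ U) ⊆ {w : Z | p w ≤ -m} := by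
    apply closure_minimal (convexHull_min hsub ?_) ?_
    · exact convex_halfSpace_le ⟨fun a b => p.map_add a b, fun c a => p.map_smul c a⟩ (-m)
    · exact IsClosed.preimage p.continuous isClosed_Iic
  have h0 := hH hU
  simp only [mem_setOf_eq, map_zero] at h0
  linarith

end main

section core
variable {Z : Type*} [AddCommGroup Z] [Module ℝ Z] [TopologicalSpace Z]
variable {X : Type*} [AddCommGroup X] [Module ℝ X]

lemma core_contradiction (f : X → Set Z) (hf : ConvexSV f) (p : Z →L[ℝ] ℝ) (x₀ x : X)
    (hx₀t : phi f p x₀ ≠ ⊤)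
    (hm : ∀ y : X, phiDer f p y (x₀ - y) ≤ 0)
    {r t₀ : ℝ} (ht₀ : t₀ ∈ Ioc (0:ℝ) 1)
    (hx : phi f p x ≤ (r : EReal))
    (hlow : (r : EReal) < phi f p (x₀ + (t₀/2) • (x - x₀))) : False := by
  obtain ⟨ht₀0, ht₀1⟩ := ht₀
  set a : ℝ := t₀ / 2 with hadef
  have ha0 : 0 < a := by positivity
  have ha1 : a < 1 := by simp only [hadef]; linarith
  obtain ⟨K₀, hK₀⟩ := er_exists_le_coe _ hx₀t
  -- upper bound for ψ(a)
  have hpt0 : (1 - a) • x₀ + (1 - (1 - a)) • x = x₀ + a • (x - x₀) := by module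
  have hub : phi f p (x₀ + a • (x - x₀)) ≤ (((1-a) * K₀ + (1 - (1-a)) * r : ℝ) : EReal) := by
    rw [← hpt0]
    exact phi_conv f hf p ⟨by linarith, by linarith⟩ hK₀ hx
  have hψt : phi f p (x₀ + a • (x - x₀)) ≠ ⊤ :=
    ne_top_of_le_ne_top (EReal.coe_ne_top _) hub
  have hψb : phi f p (x₀ + a • (x - x₀)) ≠ ⊥ := by
    intro hc; rw [hc] at hlow; exact absurd hlow (by simp)
  set A : ℝ := (phi f p (x₀ + a • (x - x₀))).toReal with hAdef
  have hA : phi f p (x₀ + a • (x - x₀)) = (A : EReal) := (EReal.coe_toReal hψt hψb).symm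
  have hrA : r < A := EReal.coe_lt_coe_iff.1 (hA ▸ hlow)
  set ε : ℝ := a * (A - r) / (2 * (1 - a)) with hεdef
  have hε : 0 < ε := by
    apply div_pos (mul_pos ha0 (by linarith)) (by linarith)
  -- Minty at y := x₀ + a • (x - x₀)
  have hmy : phiDer f p (x₀ + a • (x - x₀)) (x₀ - (x₀ + a • (x - x₀))) < (ε : EReal) :=
    lt_of_le_of_lt (hm _) (EReal.coe_pos.2 hε)
  rw [phiDer] at hmy
  simp only [iInf_lt_iff] at hmy
  obtain ⟨t, ht, hq⟩ := hmy
  rw [mem_Ioi] at ht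
  have hpt : (x₀ + a • (x - x₀)) + t • (x₀ - (x₀ + a • (x - x₀)))
      = x₀ + (a * (1 - t)) • (x - x₀) := by module
  rw [hpt] at hq
  set τ : ℝ := a * (1 - t) with hτdef
  have h1t : (0:ℝ) < 1 / t := one_div_pos.2 ht
  rw [er_posmul_lt h1t] at hq
  have heq : (ε / (1 / t) : ℝ) = t * ε := by field_simp
  rw [heq] at hq
  have h9 : phi f p (x₀ + τ • (x - x₀)) ≤ ((A + t * ε : ℝ) : EReal) := by
    have := le_of_eresid_lt hq
    rwa [hA, ← EReal.coe_add] at this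
  -- three-point convexity
  have hτa : τ < a := by nlinarith
  have h1τ : 0 < 1 - τ := by nlinarith
  set l : ℝ := (1 - a) / (1 - τ) with hldef
  have hl0 : 0 < l := div_pos (by linarith) h1τ
  have hl1 : l < 1 := (div_lt_one h1τ).2 (by linarith)
  have hlτ : l * (1 - τ) = 1 - a := div_mul_cancel₀ _ (ne_of_gt h1τ)
  have halg : l * τ + (1 - l) = a := by ring_nf at hlτ ⊢; linarith
  have hptc : l • (x₀ + τ • (x - x₀)) + (1 - l) • x = x₀ + a • (x - x₀) := by
    have step : l • (x₀ + τ • (x - x₀)) + (1 - l) • x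
        = x₀ + (l * τ + (1 - l)) • (x - x₀) := by module
    rw [step, halg]
  have h11 := phi_conv f hf p ⟨hl0, hl1⟩ h9 hx
  rw [hptc, hA, EReal.coe_le_coe_iff] at h11
  -- h11 : A ≤ l * (A + t * ε) + (1 - l) * r
  have h12 : (1 - l) * (A - r) ≤ l * (t * ε) := by nlinarith
  have h13 : (1 - l) * (1 - τ) = a * t := by
    have h' : (1 - l) * (1 - τ) = (1 - τ) - l * (1 - τ) := by ring
    rw [h', hlτ, hτdef]; ring
  have e1 : (1 - l) * (A - r) * (1 - τ) = a * t * (A - r) := by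
    have h' : (1 - l) * (A - r) * (1 - τ) = ((1 - l) * (1 - τ)) * (A - r) := by ring
    rw [h', h13]
  have e2 : l * (t * ε) * (1 - τ) = (1 - a) * (t * ε) := by
    have h' : l * (t * ε) * (1 - τ) = (l * (1 - τ)) * (t * ε) := by ring
    rw [h', hlτ]
  have hkey : a * t * (A - r) ≤ (1 - a) * (t * ε) :=
    e1 ▸ e2 ▸ mul_le_mul_of_nonneg_right h12 (le_of_lt h1τ)
  have hfin : a * (A - r) ≤ (1 - a) * ε := by
    have h' : t * (a * (A - r)) ≤ t * ((1 - a) * ε) := by linarith [hkey]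
    exact le_of_mul_le_mul_left h' ht
  have hfin2 : (1 - a) * ε = a * (A - r) / 2 := by
    have h1a : (1:ℝ) - a ≠ 0 := by linarith
    rw [hεdef]; field_simp
  rw [hfin2] at hfin
  linarith [mul_pos ha0 (sub_pos.2 hrA)]
end core

section sep
variable {Z : Type*} [AddCommGroup Z] [Module ℝ Z] [TopologicalSpace Z]
  [IsTopologicalAddGroup Z] [ContinuousSMul ℝ Z] [LocallyConvexSpace ℝ Z]

lemma sep_lemma (C : Set Z) (hCcone : ∀ c ∈ C, ∀ r : ℝ, 0 < r → r • c ∈ C)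
    (V : Set Z) (hV : V.Nonempty) (hVC : ∀ v ∈ V, ∀ c ∈ C, v + c ∈ V)
    {z : Z} (hz : z ∉ closure (convexHull ℝ V)) :
    ∃ p ∈ negDualNZ C, ∃ u : ℝ, (∀ v ∈ V, p v < u) ∧ u < p z := by
  obtain ⟨p, u, hs, hzu⟩ := geometric_hahn_banach_closed_point
    ((convex_convexHull ℝ V).closure) isClosed_closure hz
  obtain ⟨v₀, hv₀⟩ := hV
  have hVs : ∀ v ∈ V, p v < u := fun v hv =>
    hs v (subset_closure (subset_convexHull ℝ V hv))
  have hv₀u : p v₀ < u := hVs v₀ hv₀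
  have hC : ∀ c ∈ C, p c ≤ 0 := by
    intro c hc
    by_contra hpc
    push_neg at hpc
    have hr : (0:ℝ) < (u - p v₀) / p c := div_pos (by linarith) hpc
    have hmem : v₀ + ((u - p v₀) / p c) • c ∈ V :=
      hVC v₀ hv₀ _ (hCcone c hc _ hr)
    have := hVs _ hmem
    rw [map_add, map_smul, smul_eq_mul, div_mul_cancel₀ _ (ne_of_gt hpc)] at this
    linarith
  have hp0 : p ≠ 0 := by
    intro h0
    rw [h0] at hv₀u hzu
    simp at hv₀u hzu
    linarith
  exact ⟨p, ⟨hC, hp0⟩, u, hVs, hzu⟩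

end sep

theorem stmt_13
  {Z : Type*} [AddCommGroup Z] [Module ℝ Z] [TopologicalSpace Z]
  [IsTopologicalAddGroup Z] [ContinuousSMul ℝ Z] [LocallyConvexSpace ℝ Z] [T2Space Z]
  {X : Type*} [AddCommGroup X] [Module ℝ X]
  (C : Set Z) (hCclosed : IsClosed C) (hCconv : Convex ℝ C)
  (hCcone : ∀ c ∈ C, ∀ r : ℝ, 0 < r → r • c ∈ C) (hC0 : (0:Z) ∈ C)
  (hdual : (negDualNZ C).Nonempty)
  (f : X → Set Z) (hG : ∀ x, IsG C (f x)) (hf : ConvexSV f)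
  (x₀ : X) (hx₀ : (f x₀).Nonempty) :
    ((f x₀ = closure (convexHull ℝ (⋃ x : X, f x))) ↔
      ((∀ x : X, (0:Z) ∈ sder f x (x₀ - x))
        ∧ (∀ x : X, ⋂ t₀ ∈ Ioc (0:ℝ) 1, closure (convexHull ℝ
        (⋃ t ∈ Ico (0:ℝ) t₀, f (x₀ + t • (x - x₀)))) ⊆ f x₀)))
    ∧ (((∀ x : X, ∀ p ∈ negDualNZ C, phiDer f p x (x₀ - x) ≤ 0)
        ∧ (∀ x : X, ∀ p ∈ negDualNZ C, ∀ r : ℝ, (r : EReal) < phi f p x₀ →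
        ∃ t₀ ∈ Ioc (0:ℝ) 1, ∀ t ∈ Ico (0:ℝ) t₀, (r : EReal) < phi f p (x₀ + t • (x - x₀)))) →
        (f x₀ = closure (convexHull ℝ (⋃ x : X, f x)))) := by
  have hGclosed : ∀ x : X, IsClosed (f x) := fun x => by
    rw [hG x]; exact isClosed_closure
  have hconvx : ∀ x : X, Convex ℝ (f x) := fun x => by
    rw [hG x]; exact (convex_convexHull ℝ _).closure
  have hGplus : ∀ x : X, ∀ w ∈ f x, ∀ c ∈ C, w + c ∈ f x := by
    intro x w hw c hc
    have : w + c ∈ closure (convexHull ℝ (f x + C)) :=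
      subset_closure (subset_convexHull ℝ _ (Set.add_mem_add hw hc))
    rwa [← hG x] at this
  obtain ⟨z₀, hz₀⟩ := hx₀
  have hphix₀ : ∀ p : Z →L[ℝ] ℝ, phi f p x₀ ≠ ⊤ := fun p =>
    ne_top_of_le_ne_top (EReal.coe_ne_top (-(p z₀))) (sInf_le ⟨z₀, hz₀, rfl⟩)
  have hmax : (∀ x : X, f x ⊆ f x₀) → f x₀ = closure (convexHull ℝ (⋃ x : X, f x)) := by
    intro h
    apply Subset.antisymm
    · exact (Set.subset_iUnion f x₀).trans ((subset_convexHull ℝ _).trans subset_closure)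
    · exact closure_minimal (convexHull_min (iUnion_subset h) (hconvx x₀)) (hGclosed x₀)
  constructor
  · constructor
    · -- forward direction
      intro heq
      have hsub : ∀ x : X, f x ⊆ f x₀ := by
        intro x
        rw [heq]
        exact (Set.subset_iUnion f x).trans ((subset_convexHull ℝ _).trans subset_closure)
      constructor
      · -- MVI
        intro x
        simp only [sder]
        apply mem_iInter₂.2
        intro t₀ ht₀
        rw [mem_Ioi] at ht₀
        set t : ℝ := min t₀ 1 / 2 with htdef
        have htm : 0 < min t₀ 1 := lt_min ht₀ one_pos
        have ht0 : 0 < t := by positivity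
        have htt₀ : t < t₀ := by
          have := min_le_left t₀ 1; simp only [htdef]; linarith
        have ht1 : t < 1 := by
          have := min_le_right t₀ 1; simp only [htdef]; linarith
        have hsubt : f x ⊆ f (x + t • (x₀ - x)) := by
          intro b hb
          have hb₀ : b ∈ f x₀ := hsub x hb
          have hcomb : t • b + (1 - t) • b ∈ t • f x₀ + (1 - t) • f x :=
            Set.add_mem_add (smul_mem_smul_set hb₀) (smul_mem_smul_set hb)
          have hbc : t • b + (1 - t) • b = b := by module
          have hpt : t • x₀ + (1 - t) • x = x + t • (x₀ - x) := by module
          have := hf x₀ x t ⟨ht0, ht1⟩ (subset_closure hcomb)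
          rwa [hbc, hpt] at this
        have h0m : (0:Z) ∈ (1 / t) • resid (f (x + t • (x₀ - x))) (f x) := by
          refine ⟨0, ?_, smul_zero _⟩
          rintro w ⟨b, hb, c, hc, rfl⟩
          rw [mem_singleton_iff] at hc
          subst hc
          simpa using hsubt hb
        exact subset_closure (subset_convexHull ℝ _ (mem_iUnion₂.2 ⟨t, ⟨ht0, htt₀⟩, h0m⟩))
      · -- lattice lsc
        intro x w hw
        have h1 := mem_iInter₂.1 hw 1 ⟨zero_lt_one, le_refl 1⟩
        have hsub2 : (⋃ t ∈ Ico (0:ℝ) 1, f (x₀ + t • (x - x₀))) ⊆ f x₀ :=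
          iUnion₂_subset fun t _ => hsub _
        exact closure_minimal (convexHull_min hsub2 (hconvx x₀)) (hGclosed x₀) h1
    · -- reverse direction
      rintro ⟨hMVI, hlat⟩
      apply hmax
      intro x
      have hsubI : f x ⊆ ⋂ t₀ ∈ Ioc (0:ℝ) 1, closure (convexHull ℝ
          (⋃ t ∈ Ico (0:ℝ) t₀, f (x₀ + t • (x - x₀)))) := by
        intro z hz
        apply mem_iInter₂.2
        intro t₀ ht₀
        by_contra hzn
        have hz₀V : z₀ ∈ ⋃ t ∈ Ico (0:ℝ) t₀, f (x₀ + t • (x - x₀)) :=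
          mem_iUnion₂.2 ⟨0, ⟨le_refl 0, ht₀.1⟩, by rw [zero_smul, add_zero]; exact hz₀⟩
        have hVC : ∀ v ∈ ⋃ t ∈ Ico (0:ℝ) t₀, f (x₀ + t • (x - x₀)), ∀ c ∈ C,
            v + c ∈ ⋃ t ∈ Ico (0:ℝ) t₀, f (x₀ + t • (x - x₀)) := by
          intro v hv c hc
          obtain ⟨t, ht, hvf⟩ := mem_iUnion₂.1 hv
          exact mem_iUnion₂.2 ⟨t, ht, hGplus _ v hvf c hc⟩
        obtain ⟨p, hpND, u, hVu, huz⟩ := sep_lemma C hCcone _ ⟨z₀, hz₀V⟩ hVC hzn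
        have hψ : ∀ t ∈ Ico (0:ℝ) t₀, ((-u : ℝ) : EReal) ≤ phi f p (x₀ + t • (x - x₀)) := by
          intro t ht
          apply le_sInf
          rintro e ⟨w, hw', rfl⟩
          refine EReal.coe_le_coe_iff.2 ?_
          have := hVu w (mem_iUnion₂.2 ⟨t, ht, hw'⟩)
          linarith
        have hx' : phi f p x ≤ ((-(p z) : ℝ) : EReal) := sInf_le ⟨z, hz, rfl⟩
        have hr1 : phi f p x ≤ (((-(p z) + -u) / 2 : ℝ) : EReal) :=
          hx'.trans (EReal.coe_le_coe_iff.2 (by linarith))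
        have hlow : ((((-(p z) + -u) / 2 : ℝ)) : EReal) < phi f p (x₀ + (t₀/2) • (x - x₀)) :=
          lt_of_lt_of_le (EReal.coe_lt_coe_iff.2 (by linarith))
            (hψ (t₀/2) ⟨by linarith [ht₀.1], by linarith [ht₀.1]⟩)
        exact core_contradiction f hf p x₀ x (hphix₀ p)
          (fun y => sder_to_phiDer f p (hMVI y)) ht₀ hr1 hlow
      exact hsubI.trans (hlat x)
  · -- part 2
    rintro ⟨hmvi, hlsc⟩
    apply hmax
    intro x z hz
    by_contra hzn
    have hcleq : closure (convexHull ℝ (f x₀)) = f x₀ :=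
      Subset.antisymm
        (closure_minimal (convexHull_min (subset_refl _) (hconvx x₀)) (hGclosed x₀))
        ((subset_convexHull ℝ _).trans subset_closure)
    have hzn' : z ∉ closure (convexHull ℝ (f x₀)) := by rw [hcleq]; exact hzn
    obtain ⟨p, hpND, u, hVu, huz⟩ := sep_lemma C hCcone (f x₀) ⟨z₀, hz₀⟩
      (fun v hv c hc => hGplus x₀ v hv c hc) hzn'
    have hψ₀ : ((-u : ℝ) : EReal) ≤ phi f p x₀ := by
      apply le_sInf
      rintro e ⟨w, hw', rfl⟩
      refine EReal.coe_le_coe_iff.2 ?_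
      have := hVu w hw'
      linarith
    have hx' : phi f p x ≤ ((-(p z) : ℝ) : EReal) := sInf_le ⟨z, hz, rfl⟩
    have hr1 : phi f p x ≤ (((-(p z) + -u) / 2 : ℝ) : EReal) :=
      hx'.trans (EReal.coe_le_coe_iff.2 (by linarith))
    have hrx₀ : ((((-(p z) + -u) / 2 : ℝ)) : EReal) < phi f p x₀ :=
      lt_of_lt_of_le (EReal.coe_lt_coe_iff.2 (by linarith)) hψ₀
    obtain ⟨t₀, ht₀, hst⟩ := hlsc x p hpND _ hrx₀
    have hlow := hst (t₀/2) ⟨by linarith [ht₀.1], by linarith [ht₀.1]⟩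
    exact core_contradiction f hf p x₀ x (hphix₀ p) (fun y => hmvi y p hpND) ht₀ hr1 hlow
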